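/- Let W_R be a Lie algebra of Witt type over a field K of characteristic ≠ 2,3, with basis {e_α : α ∈ R} and bracket [e_α, e_β] = (β−α)e_{α+β}. For each γ ∈ R with 2γ ∈ R, the linear map D_γ defined by D_γ(e_α) = e_{α+γ} is a (1/2)-derivation of W_R. -/

import Mathlib

/-- In a Lie algebra of Witt type `W_R`, with basis `{e_α : α ∈ R}` and
bracket `[e_α, e_β] = (β−α) e_{α+β}` (group elements acting as scalars via a
map `c : G → K`), for each `γ ∈ R` with `2γ ∈ R` the map
`D_γ : e_α ↦ e_{α+γ}` is a (1/2)-derivation. -/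
theorem witt_type_Dgamma_is_half_derivation (K G : Type*) [Field K]
    [AddCommGroup G] (h2 : (2 : K) ≠ 0) (h3 : (3 : K) ≠ 0)
    (R : Set G) [DecidablePred (· ∈ R)] (h0 : (0 : G) ∈ R)
    (hR : ∀ α ∈ R, ∀ β ∈ R, α ≠ β → α + β ∈ R)
    (c : G →+ K)
    (e : R → (R →₀ K)) (he : ∀ α : R, e α = Finsupp.single α 1)
    (br : (R →₀ K) → (R →₀ K) → (R →₀ K))
    (hbr : ∀ f g : R →₀ K, br f g =
      f.sum fun α x => g.sum fun β y =>
        if h : ((α : G) + (β : G)) ∈ R then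
          (x * y * (c (β : G) - c (α : G))) • e ⟨(α : G) + (β : G), h⟩
        else 0)
    (γ : G) (hγ : γ ∈ R) (h2γ : γ + γ ∈ R)
    (Dγ : (R →₀ K) → (R →₀ K))
    (hDγ : ∀ f : R →₀ K, Dγ f =
      f.sum fun α x =>
        if h : ((α : G) + γ) ∈ R then x • e ⟨(α : G) + γ, h⟩ else 0) :
    ∀ f g : R →₀ K, Dγ (br f g) = (2 : K)⁻¹ • (br (Dγ f) g + br f (Dγ g)) := by
  classical
  have memγ : ∀ a : R, (a : G) + γ ∈ R := by
    intro a
    by_cases haγ : (a : G) = γ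
    · rw [haγ]; exact h2γ
    · exact hR a a.2 γ hγ haγ
  have hDs : ∀ (a : R) (x : K),
      Dγ (Finsupp.single a x) = Finsupp.single ⟨(a : G) + γ, memγ a⟩ x := by
    intro a x
    rw [hDγ, Finsupp.sum_single_index]
    · rw [dif_pos (memγ a), he, Finsupp.smul_single, smul_eq_mul, mul_one]
    · split_ifs <;> simp
  have hD0 : Dγ 0 = 0 := by rw [hDγ, Finsupp.sum_zero_index]
  have hDadd : ∀ a b, Dγ (a + b) = Dγ a + Dγ b := by
    intro a b
    rw [hDγ, hDγ, hDγ, Finsupp.sum_add_index']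
    · intro α; split_ifs <;> simp
    · intro α x y; split_ifs <;> simp [add_smul]
  have hbr0l : ∀ g, br 0 g = 0 := by intro g; rw [hbr, Finsupp.sum_zero_index]
  have hbr0r : ∀ f, br f 0 = 0 := by
    intro f; rw [hbr]
    simp [Finsupp.sum_zero_index, Finsupp.sum]
  have hbraddl : ∀ f1 f2 g, br (f1 + f2) g = br f1 g + br f2 g := by
    intro f1 f2 g
    rw [hbr, hbr, hbr, Finsupp.sum_add_index']
    · intro α
      simp only [Finsupp.sum]
      apply Finset.sum_eq_zero
      intro β _
      split_ifs <;> simp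
    · intro α x y
      rw [← Finsupp.sum_add]
      apply Finsupp.sum_congr
      intro β _
      split_ifs with h
      · rw [← add_smul]; ring_nf
      · simp
  have hbraddr : ∀ f g1 g2, br f (g1 + g2) = br f g1 + br f g2 := by
    intro f g1 g2
    rw [hbr, hbr, hbr, ← Finsupp.sum_add]
    apply Finsupp.sum_congr
    intro α _
    rw [Finsupp.sum_add_index']
    · intro β; split_ifs <;> simp
    · intro β y z
      split_ifs with h
      · rw [← add_smul]; ring_nf
      · simp
  have hbrs : ∀ (a b : R) (x y : K),
      br (Finsupp.single a x) (Finsupp.single b y) =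
        if h : (a : G) + (b : G) ∈ R then
          Finsupp.single (⟨(a : G) + (b : G), h⟩ : R) (x * y * (c (b : G) - c (a : G)))
        else 0 := by
    intro a b x y
    rw [hbr, Finsupp.sum_single_index, Finsupp.sum_single_index]
    · split_ifs with h
      · rw [he, Finsupp.smul_single, smul_eq_mul, mul_one]
      · rfl
    · split_ifs <;> simp
    · rw [Finsupp.sum_single_index]
      · split_ifs <;> simp
      · split_ifs <;> simp
  intro f g
  induction f using Finsupp.induction_linear with
  | zero =>
      rw [hbr0l, hD0]
      simp [hbr0l]
  | add f1 f2 ih1 ih2 =>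
      rw [hbraddl, hDadd, ih1, ih2, hDadd, hbraddl, hbraddl, ← smul_add]
      congr 1
      abel
  | single a x =>
      induction g using Finsupp.induction_linear with
      | zero =>
          rw [hbr0r, hD0]
          simp [hbr0r]
      | add g1 g2 ih1 ih2 =>
          rw [hbraddr, hDadd, ih1, ih2, hDadd, hbraddr, hbraddr, ← smul_add]
          congr 1
          abel
      | single b y =>
          rw [hbrs, hDs, hDs, hbrs, hbrs]
          by_cases hab : (a : G) + (b : G) ∈ R
          · rw [dif_pos hab, hDs]
            have hc1 : (a : G) + γ + (b : G) ∈ R := by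
              rw [show (a : G) + γ + (b : G) = (a : G) + (b : G) + γ by abel]
              exact memγ ⟨_, hab⟩
            have hc2 : (a : G) + ((b : G) + γ) ∈ R := by
              rw [show (a : G) + ((b : G) + γ) = (a : G) + (b : G) + γ by abel]
              exact memγ ⟨_, hab⟩
            rw [dif_pos hc1, dif_pos hc2]
            have e1 : (⟨(a : G) + γ + (b : G), hc1⟩ : R)
                = ⟨(a : G) + (b : G) + γ, memγ ⟨_, hab⟩⟩ := Subtype.ext (by abel)
            have e2 : (⟨(a : G) + ((b : G) + γ), hc2⟩ : R)
                = ⟨(a : G) + (b : G) + γ, memγ ⟨_, hab⟩⟩ := Subtype.ext (by abel)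
            rw [e1, e2, ← Finsupp.single_add, Finsupp.smul_single, smul_eq_mul]
            congr 1
            have hca : c ((⟨(a : G) + γ, memγ a⟩ : R) : G) = c a + c γ := by
              simp [map_add]
            have hcb : c ((⟨(b : G) + γ, memγ b⟩ : R) : G) = c b + c γ := by
              simp [map_add]
            rw [hca, hcb]
            field_simp
            ring
          · rw [dif_neg hab, hD0]
            have hab' : (a : G) = (b : G) := by
              by_contra hne
              exact hab (hR a a.2 b b.2 hne)
            by_cases hc1 : (a : G) + γ + (b : G) ∈ R
            · have hc2 : (a : G) + ((b : G) + γ) ∈ R := by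
                rw [show (a : G) + ((b : G) + γ) = (a : G) + γ + (b : G) by abel]
                exact hc1
              rw [dif_pos hc1, dif_pos hc2]
              have e2 : (⟨(a : G) + ((b : G) + γ), hc2⟩ : R)
                  = ⟨(a : G) + γ + (b : G), hc1⟩ := Subtype.ext (by abel)
              rw [e2, ← Finsupp.single_add]
              have hca : c ((⟨(a : G) + γ, memγ a⟩ : R) : G) = c a + c γ := by
                simp [map_add]
              have hcb : c ((⟨(b : G) + γ, memγ b⟩ : R) : G) = c b + c γ := by
                simp [map_add]
              have hcc : c (b : G) = c (a : G) := by rw [hab']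
              rw [hca, hcb, hcc]
              rw [show x * y * (c (a : G) - (c (a : G) + c γ))
                    + x * y * (c (a : G) + c γ - c (a : G)) = 0 by ring]
              simp
            · have hc2 : ¬ ((a : G) + ((b : G) + γ) ∈ R) := by
                rw [show (a : G) + ((b : G) + γ) = (a : G) + γ + (b : G) by abel]
                exact hc1
              rw [dif_neg hc1, dif_neg hc2]
              simp
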